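/- Let d ≥ 2 be a natural number and let ℝ^d denote EuclideanSpace ℝ (Fin d) with Lebesgue measure. There exists a constant C(d) > 0 with the following property: for every M ≥ 0 and every measurable function h : ℝ^d → ℝ with |h(z)| ≤ M for almost every z and h(z) = 0 for ‖z‖ > 1, defining E(x) := ∫_{ℝ^d} ((x − z)/‖x − z‖^d)·h(z) dz (the integrand being Lebesgue integrable in z for each x), one has for all x, y ∈ ℝ^d with 0 < ‖x − y‖ ≤ 1/12: ‖E(x) − E(y)‖ ≤ C(d)·M·‖x − y‖·(1 + |log ‖x − y‖|). -/

import Mathlib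

open MeasureTheory Metric Set ENNReal

lemma aux_pow_sub_pow_le {s t : ℝ} (ht : 0 ≤ t) (hts : t ≤ s) (d : ℕ) :
    s ^ d - t ^ d ≤ d * s ^ (d - 1) * (s - t) := by
  have hgs := geom_sum₂_mul s t d
  rw [← hgs]
  have hs : 0 ≤ s := ht.trans hts
  have hsum : (∑ i ∈ Finset.range d, s ^ i * t ^ (d - 1 - i)) ≤ d * s ^ (d - 1) := by
    calc (∑ i ∈ Finset.range d, s ^ i * t ^ (d - 1 - i))
        ≤ ∑ i ∈ Finset.range d, s ^ (d-1) := by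
          refine Finset.sum_le_sum fun i hi => ?_
          have h1 : s ^ i * t ^ (d - 1 - i) ≤ s ^ i * s ^ (d - 1 - i) := by
            have := pow_le_pow_left₀ ht hts (d - 1 - i)
            exact mul_le_mul_of_nonneg_left this (pow_nonneg hs i)
          have h2 : s ^ i * s ^ (d - 1 - i) = s ^ (i + (d - 1 - i)) := (pow_add s i _).symm
          have hi' : i < d := Finset.mem_range.1 hi
          have h3 : i + (d - 1 - i) = d - 1 := by omega
          calc s ^ i * t ^ (d-1-i) ≤ s ^ i * s ^ (d-1-i) := h1
            _ = s ^ (d-1) := by rw [h2, h3]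
      _ = d * s ^ (d-1) := by simp [Finset.sum_const, mul_comm]
  exact mul_le_mul_of_nonneg_right hsum (by linarith)

lemma aux_abs_pow_sub_pow {s t : ℝ} (hs : 0 ≤ s) (ht : 0 ≤ t) (d : ℕ) :
    |s ^ d - t ^ d| ≤ d * max s t ^ (d - 1) * |s - t| := by
  rcases le_total t s with h | h
  · rw [abs_of_nonneg (sub_nonneg.2 (pow_le_pow_left₀ ht h d)),
      abs_of_nonneg (sub_nonneg.2 h), max_eq_left h]
    exact aux_pow_sub_pow_le ht h d
  · rw [abs_sub_comm, abs_sub_comm s t,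
      abs_of_nonneg (sub_nonneg.2 (pow_le_pow_left₀ hs h d)),
      abs_of_nonneg (sub_nonneg.2 h), max_eq_right h]
    exact aux_pow_sub_pow_le hs h d

lemma aux_kernel_diff {V : Type*} [NormedAddCommGroup V] [NormedSpace ℝ V] {d : ℕ} (hd : 1 ≤ d)
    {a b : V} {r : ℝ} (hr : 0 < r) (hab : ‖a - b‖ ≤ r) (ha : 3 * r ≤ ‖a‖) :
    ‖(‖a‖ ^ d)⁻¹ • a - (‖b‖ ^ d)⁻¹ • b‖ ≤ (1 + d * 2 ^ (d - 1)) * r * (‖a‖ ^ d)⁻¹ := by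
  set ta := ‖a‖ with hta
  set tb := ‖b‖ with htb
  have hta0 : 0 < ta := lt_of_lt_of_le (by linarith) ha
  have htb_ge : ta - r ≤ tb := by
    have := norm_sub_norm_le a b
    simp only [← hta, ← htb] at this ⊢
    linarith
  have htb_lb : (2/3) * ta ≤ tb := by linarith [ha]
  have htb0 : 0 < tb := lt_of_lt_of_le (by positivity) htb_lb
  have htb_ub : tb ≤ ta + r := by
    have := norm_sub_norm_le b a
    rw [norm_sub_rev] at this
    linarith
  have hmax : max tb ta ≤ (4/3) * ta := by
    apply max_le <;> linarith
  have hdiff : |ta - tb| ≤ r := (abs_norm_sub_norm_le a b).trans hab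
  -- decomposition
  have hdecomp : (ta ^ d)⁻¹ • a - (tb ^ d)⁻¹ • b
      = (ta ^ d)⁻¹ • (a - b) + ((ta ^ d)⁻¹ - (tb ^ d)⁻¹) • b := by
    module
  rw [hdecomp]
  have h1 : ‖(ta ^ d)⁻¹ • (a - b)‖ ≤ (ta ^ d)⁻¹ * r := by
    rw [norm_smul, Real.norm_eq_abs, abs_of_nonneg (by positivity)]
    exact mul_le_mul_of_nonneg_left hab (by positivity)
  have h2 : ‖((ta ^ d)⁻¹ - (tb ^ d)⁻¹) • b‖ ≤ d * 2 ^ (d - 1) * r * (ta ^ d)⁻¹ := by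
    rw [norm_smul, Real.norm_eq_abs, ← htb]
    have hinv : (ta ^ d)⁻¹ - (tb ^ d)⁻¹ = (tb ^ d - ta ^ d) / (ta ^ d * tb ^ d) := by
      field_simp
    rw [hinv, abs_div, abs_of_nonneg (by positivity : (0:ℝ) ≤ ta ^ d * tb ^ d)]
    have hnum : |tb ^ d - ta ^ d| ≤ d * ((4/3) * ta) ^ (d - 1) * r := by
      calc |tb ^ d - ta ^ d| ≤ d * max tb ta ^ (d-1) * |tb - ta| :=
            aux_abs_pow_sub_pow htb0.le hta0.le d
        _ ≤ d * ((4/3) * ta) ^ (d-1) * r := by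
            apply mul_le_mul
            · exact mul_le_mul_of_nonneg_left
                (pow_le_pow_left₀ (le_max_left _ _ |>.trans' htb0.le) hmax _) (by positivity)
            · rw [abs_sub_comm]; exact hdiff
            · exact abs_nonneg _
            · positivity
    -- |num|/(ta^d tb^d) * tb ≤ d*2^(d-1)*r/ta^d
    have hbd : tb ^ d = tb ^ (d - 1) * tb := by
      conv_lhs => rw [show d = (d-1) + 1 by omega, pow_succ]
    have key : |tb ^ d - ta ^ d| / (ta ^ d * tb ^ d) * tb
        ≤ (d * ((4/3) * ta) ^ (d - 1) * r) / (ta ^ d * ((2/3) * ta) ^ (d-1)) := by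
      have e1 : ta ^ d * tb ^ d = (ta ^ d * tb ^ (d-1)) * tb := by rw [hbd]; ring
      rw [e1, div_mul_eq_div_div, div_mul_cancel₀ _ htb0.ne']
      apply div_le_div₀ (by positivity) hnum (by positivity)
      have : ((2/3) * ta) ^ (d-1) ≤ tb ^ (d-1) := pow_le_pow_left₀ (by positivity) htb_lb _
      exact mul_le_mul_of_nonneg_left this (by positivity)
    have heq : (d * ((4/3) * ta) ^ (d - 1) * r) / (ta ^ d * ((2/3) * ta) ^ (d-1))
        = d * 2 ^ (d - 1) * r * (ta ^ d)⁻¹ := by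
      rw [mul_pow, mul_pow]
      have h43 : ((4:ℝ)/3) ^ (d-1) = 2 ^ (d-1) * ((2:ℝ)/3) ^ (d-1) := by
        rw [← mul_pow]; norm_num
      rw [h43]
      field_simp
    calc |tb ^ d - ta ^ d| / (ta ^ d * tb ^ d) * tb
        ≤ (d * ((4/3) * ta) ^ (d - 1) * r) / (ta ^ d * ((2/3) * ta) ^ (d-1)) := key
      _ = d * 2 ^ (d - 1) * r * (ta ^ d)⁻¹ := heq
  calc ‖(ta ^ d)⁻¹ • (a - b) + ((ta ^ d)⁻¹ - (tb ^ d)⁻¹) • b‖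
      ≤ ‖(ta ^ d)⁻¹ • (a - b)‖ + ‖((ta ^ d)⁻¹ - (tb ^ d)⁻¹) • b‖ := norm_add_le _ _
    _ ≤ (ta ^ d)⁻¹ * r + d * 2 ^ (d - 1) * r * (ta ^ d)⁻¹ := add_le_add h1 h2
    _ = (1 + d * 2 ^ (d - 1)) * r * (ta ^ d)⁻¹ := by ring

lemma aux_dyadic {t R : ℝ} (ht : 0 < t) (htR : t < R) :
    ∃ n : ℕ, R / 2 ^ (n + 1) ≤ t ∧ t < R / 2 ^ n := by
  have hex : ∃ m : ℕ, R ≤ t * 2 ^ m := by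
    obtain ⟨m, hm⟩ := pow_unbounded_of_one_lt (R / t) (one_lt_two (α := ℝ))
    exact ⟨m, by rw [div_lt_iff₀ ht] at hm; linarith [hm]⟩
  classical
  let n₀ := Nat.find hex
  have hspec : R ≤ t * 2 ^ n₀ := Nat.find_spec hex
  have hn₀ : n₀ ≠ 0 := by
    intro h
    rw [h] at hspec
    simp at hspec
    linarith
  refine ⟨n₀ - 1, ?_, ?_⟩
  · rw [div_le_iff₀ (by positivity)]
    have : n₀ - 1 + 1 = n₀ := Nat.succ_pred_eq_of_pos (Nat.pos_of_ne_zero hn₀)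
    rw [this]
    linarith [hspec]
  · have hmin : ¬ (R ≤ t * 2 ^ (n₀ - 1)) := Nat.find_min hex (by omega)
    push_neg at hmin
    rw [lt_div_iff₀ (by positivity)]
    linarith

lemma aux_near (e : ℕ) (c : EuclideanSpace ℝ (Fin (e + 1))) {R : ℝ} (hR : 0 < R) :
    ∫⁻ z in ball c R, ENNReal.ofReal ((‖c - z‖ ^ (e + 1))⁻¹ * ‖c - z‖)
      ≤ ENNReal.ofReal (2 ^ (e + 1) * R) * volume (ball (0 : EuclideanSpace ℝ (Fin (e + 1))) 1) := by
  haveI : Nontrivial (EuclideanSpace ℝ (Fin (e + 1))) :=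
    Module.nontrivial_of_finrank_pos (R := ℝ)
      (by rw [finrank_euclideanSpace_fin]; omega)
  set κ := volume (ball (0 : EuclideanSpace ℝ (Fin (e + 1))) 1) with hκ
  set g := fun z : EuclideanSpace ℝ (Fin (e + 1)) => ENNReal.ofReal ((‖c - z‖ ^ (e + 1))⁻¹ * ‖c - z‖) with hg
  set s := fun n : ℕ => ball c (R / 2 ^ n) \ ball c (R / 2 ^ (n + 1)) with hs
  have hcover : ball c R ⊆ {c} ∪ ⋃ n, s n := by
    intro z hz
    rcases eq_or_ne z c with rfl | hzc
    · exact Or.inl rfl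
    · have ht : 0 < dist z c := dist_pos.2 hzc
      obtain ⟨n, h1, h2⟩ := aux_dyadic ht (mem_ball.1 hz)
      exact Or.inr (mem_iUnion.2 ⟨n, mem_ball.2 h2, fun hmem => absurd (mem_ball.1 hmem) (not_lt.2 h1)⟩)
  have hpiece : ∀ n : ℕ, ∫⁻ z in s n, g z ∂volume ≤ ENNReal.ofReal (2 ^ e * R) * (ENNReal.ofReal 2⁻¹) ^ n * κ := by
    intro n
    have hl : (0:ℝ) < R / 2 ^ (n + 1) := by positivity
    have hbound : ∀ z ∈ s n, g z ≤ ENNReal.ofReal (((R / 2 ^ (n+1)) ^ e)⁻¹) := by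
      intro z hz
      have hz1 : R / 2 ^ (n + 1) ≤ dist z c := le_of_not_gt fun hc => hz.2 (mem_ball.2 hc)
      have hdz : ‖c - z‖ = dist z c := by rw [dist_comm, dist_eq_norm]
      have ht0 : 0 < ‖c - z‖ := by rw [hdz]; linarith
      have : (‖c - z‖ ^ (e + 1))⁻¹ * ‖c - z‖ = (‖c - z‖ ^ e)⁻¹ := by
        rw [pow_succ]
        field_simp
      rw [hg]
      simp only
      rw [this]
      apply ENNReal.ofReal_le_ofReal
      apply inv_anti₀ (by positivity)
      apply pow_le_pow_left₀ hl.le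
      rw [← hdz] at hz1; exact hz1
    calc ∫⁻ z in s n, g z ∂volume
        ≤ ∫⁻ _ in s n, ENNReal.ofReal (((R / 2 ^ (n+1)) ^ e)⁻¹) ∂volume := by
          apply setLIntegral_mono' (measurableSet_ball.diff measurableSet_ball) hbound
      _ = ENNReal.ofReal (((R / 2 ^ (n+1)) ^ e)⁻¹) * volume (s n) := setLIntegral_const _ _
      _ ≤ ENNReal.ofReal (((R / 2 ^ (n+1)) ^ e)⁻¹) * volume (ball c (R / 2 ^ n)) := by
          gcongr
          exact diff_subset
      _ = ENNReal.ofReal (((R / 2 ^ (n+1)) ^ e)⁻¹) * (ENNReal.ofReal ((R / 2 ^ n) ^ (e+1)) * κ) := by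
          rw [Measure.addHaar_ball volume c (by positivity : (0:ℝ) ≤ R / 2 ^ n),
            finrank_euclideanSpace_fin]
      _ = ENNReal.ofReal (2 ^ e * R) * (ENNReal.ofReal 2⁻¹) ^ n * κ := by
          rw [← mul_assoc, ← ENNReal.ofReal_mul (by positivity), ← ENNReal.ofReal_pow (by norm_num),
            ← ENNReal.ofReal_mul (by positivity)]
          congr 2
          rw [pow_succ (2:ℝ) n, inv_pow]
          have h2n : (0:ℝ) < 2 ^ n := by positivity
          generalize (2:ℝ) ^ n = q at h2n ⊢
          rw [div_pow, div_pow, mul_pow, pow_succ, pow_succ]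
          field_simp
  calc ∫⁻ z in ball c R, g z ∂volume
      ≤ ∫⁻ z in {c} ∪ ⋃ n, s n, g z ∂volume := lintegral_mono_set hcover
    _ ≤ (∫⁻ z in {c}, g z ∂volume) + ∫⁻ z in ⋃ n, s n, g z ∂volume := lintegral_union_le _ _ _
    _ = ∫⁻ z in ⋃ n, s n, g z ∂volume := by
        rw [setLIntegral_measure_zero _ _ (measure_singleton c), zero_add]
    _ ≤ ∑' n, ∫⁻ z in s n, g z ∂volume := lintegral_iUnion_le _ _
    _ ≤ ∑' n : ℕ, ENNReal.ofReal (2 ^ e * R) * (ENNReal.ofReal 2⁻¹) ^ n * κ := ENNReal.tsum_le_tsum hpiece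
    _ = ENNReal.ofReal (2 ^ e * R) * κ * ∑' n : ℕ, (ENNReal.ofReal 2⁻¹) ^ n := by
        rw [← ENNReal.tsum_mul_left]
        congr 1; ext n; ring
    _ = ENNReal.ofReal (2 ^ (e + 1) * R) * κ := by
        have hq : ENNReal.ofReal (2:ℝ)⁻¹ = (2 : ℝ≥0∞)⁻¹ := by
          rw [ENNReal.ofReal_inv_of_pos (by norm_num), ENNReal.ofReal_ofNat]
        rw [hq, ENNReal.tsum_geometric, ENNReal.one_sub_inv_two, inv_inv]
        rw [show ENNReal.ofReal (2 ^ e * R) * κ * 2 = (ENNReal.ofReal (2 ^ e * R) * 2) * κ by ring]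
        congr 1
        rw [show (2:ℝ≥0∞) = ENNReal.ofReal 2 by rw [ENNReal.ofReal_ofNat],
          ← ENNReal.ofReal_mul (by positivity)]
        congr 1
        ring


lemma aux_far (e : ℕ) (x : EuclideanSpace ℝ (Fin (e + 1))) {r : ℝ} (hr : 0 < r) (hr1 : r ≤ 1) :
    ∫⁻ z in closedBall (0 : EuclideanSpace ℝ (Fin (e + 1))) 1 ∩ (ball x (3 * r))ᶜ,
        ENNReal.ofReal ((‖x - z‖ ^ (e + 1))⁻¹)
      ≤ ENNReal.ofReal (3 * (1 + |Real.log r|)) *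
          (ENNReal.ofReal (2 ^ (e + 1)) *
            volume (ball (0 : EuclideanSpace ℝ (Fin (e + 1))) 1)) := by
  haveI : Nontrivial (EuclideanSpace ℝ (Fin (e + 1))) :=
    Module.nontrivial_of_finrank_pos (R := ℝ)
      (by rw [finrank_euclideanSpace_fin]; omega)
  classical
  set κ := volume (ball (0 : EuclideanSpace ℝ (Fin (e + 1))) 1) with hκ
  set A := ENNReal.ofReal ((2:ℝ) ^ (e + 1)) * κ with hA
  set N := ⌈Real.logb 2 r⁻¹⌉₊ with hN
  set f := fun z : EuclideanSpace ℝ (Fin (e + 1)) =>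
    ENNReal.ofReal ((‖x - z‖ ^ (e + 1))⁻¹) with hf
  set a := fun k : ℕ => ball x (3 * r * 2 ^ (k + 1)) \ ball x (3 * r * 2 ^ k) with ha
  set T := closedBall (0 : EuclideanSpace ℝ (Fin (e + 1))) 1 \ ball x (3 * r * 2 ^ (N + 1))
    with hT
  have h2N : r⁻¹ ≤ 2 ^ N := by
    have h1 : Real.logb 2 r⁻¹ ≤ (N : ℝ) := Nat.le_ceil _
    calc r⁻¹ = (2:ℝ) ^ Real.logb 2 r⁻¹ := by
          rw [Real.rpow_logb (by norm_num) (by norm_num) (by positivity)]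
      _ ≤ (2:ℝ) ^ (N:ℝ) := Real.rpow_le_rpow_of_exponent_le (by norm_num) h1
      _ = 2 ^ N := by rw [Real.rpow_natCast]
  -- covering
  have hcover : closedBall (0 : EuclideanSpace ℝ (Fin (e + 1))) 1 ∩ (ball x (3 * r))ᶜ ⊆
      (⋃ k ∈ Finset.range (N + 1), a k) ∪ T := by
    rintro z ⟨hz1, hz2⟩
    have h3r : 3 * r ≤ dist z x := not_lt.1 fun hc => hz2 (mem_ball.2 hc)
    by_cases hcase : dist z x < 3 * r * 2 ^ (N + 1)
    · left
      have hex : ∃ k : ℕ, dist z x < 3 * r * 2 ^ (k + 1) := ⟨N, hcase⟩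
      set k₀ := Nat.find hex with hk₀
      have hk₀spec : dist z x < 3 * r * 2 ^ (k₀ + 1) := Nat.find_spec hex
      have hk₀le : k₀ ≤ N := Nat.find_min' hex hcase
      have hlow : 3 * r * 2 ^ k₀ ≤ dist z x := by
        rcases Nat.eq_zero_or_pos k₀ with h0 | hpos
        · rw [h0]; simpa using h3r
        · have := Nat.find_min hex (Nat.pred_lt hpos.ne')
          push_neg at this
          calc 3 * r * 2 ^ k₀ = 3 * r * 2 ^ ((k₀ - 1) + 1) := by
                rw [show k₀ - 1 + 1 = k₀ from Nat.succ_pred_eq_of_pos hpos]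
            _ ≤ dist z x := this
      refine mem_biUnion (Finset.mem_range.2 (by omega)) ⟨mem_ball.2 hk₀spec, ?_⟩
      exact fun hmem => absurd (mem_ball.1 hmem) (not_lt.2 hlow)
    · exact Or.inr ⟨hz1, fun hmem => hcase (mem_ball.1 hmem)⟩
  -- piece bounds
  have hpiece : ∀ k : ℕ, ∫⁻ z in a k, f z ∂volume ≤ A := by
    intro k
    have hl : (0:ℝ) < 3 * r * 2 ^ k := by positivity
    have hbound : ∀ z ∈ a k, f z ≤ ENNReal.ofReal (((3 * r * 2 ^ k) ^ (e + 1))⁻¹) := by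
      intro z hz
      have hz1 : 3 * r * 2 ^ k ≤ dist z x := not_lt.1 fun hc => hz.2 (mem_ball.2 hc)
      have hdz : ‖x - z‖ = dist z x := by rw [dist_comm, dist_eq_norm]
      apply ENNReal.ofReal_le_ofReal
      apply inv_anti₀ (by positivity)
      apply pow_le_pow_left₀ hl.le
      rw [hdz]; exact hz1
    calc ∫⁻ z in a k, f z ∂volume
        ≤ ∫⁻ _ in a k, ENNReal.ofReal (((3 * r * 2 ^ k) ^ (e + 1))⁻¹) ∂volume :=
          setLIntegral_mono' (measurableSet_ball.diff measurableSet_ball) hbound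
      _ = ENNReal.ofReal (((3 * r * 2 ^ k) ^ (e + 1))⁻¹) * volume (a k) := setLIntegral_const _ _
      _ ≤ ENNReal.ofReal (((3 * r * 2 ^ k) ^ (e + 1))⁻¹) *
            volume (ball x (3 * r * 2 ^ (k + 1))) := by gcongr; exact diff_subset
      _ = ENNReal.ofReal (((3 * r * 2 ^ k) ^ (e + 1))⁻¹) *
            (ENNReal.ofReal ((3 * r * 2 ^ (k + 1)) ^ (e + 1)) * κ) := by
          rw [Measure.addHaar_ball volume x (by positivity : (0:ℝ) ≤ 3 * r * 2 ^ (k + 1)),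
            finrank_euclideanSpace_fin]
      _ = A := by
          rw [hA, ← mul_assoc, ← ENNReal.ofReal_mul (by positivity)]
          congr 2
          have : (3 * r * 2 ^ (k + 1)) ^ (e + 1) = 2 ^ (e+1) * (3 * r * 2 ^ k) ^ (e + 1) := by
            rw [show 3 * r * 2 ^ (k + 1) = 2 * (3 * r * 2 ^ k) by ring, mul_pow]
          rw [this]
          field_simp
  -- T bound
  have hTbound : ∫⁻ z in T, f z ∂volume ≤ A := by
    have h1 : ∀ z ∈ T, f z ≤ 1 := by
      intro z hz
      have hz1 : 3 * r * 2 ^ (N + 1) ≤ dist z x := not_lt.1 fun hc => hz.2 (mem_ball.2 hc)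
      have h3 : (1:ℝ) ≤ dist z x := by
        have : (3:ℝ) ≤ 3 * r * 2 ^ (N + 1) := by
          have h2 : r⁻¹ ≤ 2 ^ (N + 1) := h2N.trans (by
            apply pow_le_pow_right₀ (by norm_num); omega)
          calc (3:ℝ) = 3 * r * r⁻¹ := by field_simp
            _ ≤ 3 * r * 2 ^ (N + 1) := by
              apply mul_le_mul_of_nonneg_left h2 (by positivity)
        linarith
      have hdz : ‖x - z‖ = dist z x := by rw [dist_comm, dist_eq_norm]
      have : (1:ℝ) ≤ ‖x - z‖ ^ (e + 1) := one_le_pow₀ (by rw [hdz]; exact h3)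
      calc f z ≤ ENNReal.ofReal 1 := ENNReal.ofReal_le_ofReal (by
            rw [← inv_one]
            exact inv_anti₀ one_pos this)
        _ = 1 := ENNReal.ofReal_one
    calc ∫⁻ z in T, f z ∂volume ≤ ∫⁻ _ in T, 1 ∂volume :=
          setLIntegral_mono' (measurableSet_closedBall.diff measurableSet_ball) h1
      _ = volume T := setLIntegral_one _
      _ ≤ volume (ball (0 : EuclideanSpace ℝ (Fin (e + 1))) 2) := by
          apply measure_mono
          exact diff_subset.trans (closedBall_subset_ball one_lt_two)
      _ = ENNReal.ofReal ((2:ℝ) ^ (e + 1)) * κ := by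
          rw [Measure.addHaar_ball volume _ (by norm_num : (0:ℝ) ≤ 2),
            finrank_euclideanSpace_fin]
  -- disjointness
  have hdisj : (↑(Finset.range (N + 1)) : Set ℕ).PairwiseDisjoint a := by
    have key : ∀ k l : ℕ, k < l → Disjoint (a k) (a l) := by
      intro k l hkl
      rw [Set.disjoint_left]
      intro z hzk hzl
      have h1 : dist z x < 3 * r * 2 ^ (k + 1) := mem_ball.1 hzk.1
      have h2 : 3 * r * 2 ^ l ≤ dist z x := not_lt.1 fun hc => hzl.2 (mem_ball.2 hc)
      have h3 : (2:ℝ) ^ (k + 1) ≤ 2 ^ l := pow_le_pow_right₀ (by norm_num) (by omega)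
      nlinarith [hr]
    intro k _ l _ hkl
    rcases lt_or_gt_of_ne hkl with h | h
    · exact key k l h
    · exact (key l k h).symm
  -- N + 2 bound
  have hNbound : (N : ℝ) + 2 ≤ 3 * (1 + |Real.log r|) := by
    have hlogb : Real.logb 2 r⁻¹ = -Real.log r / Real.log 2 := by
      rw [Real.logb, Real.log_inv]
    have hlog2 : (0.6931471803 : ℝ) < Real.log 2 := Real.log_two_gt_d9
    have hlognonneg : 0 ≤ -Real.log r := by
      simpa using Real.log_nonpos hr.le hr1
    have habs : |Real.log r| = -Real.log r := abs_of_nonpos (by linarith)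
    have hlogbnn : 0 ≤ Real.logb 2 r⁻¹ := by
      rw [hlogb]; positivity
    have hceil : (N : ℝ) < Real.logb 2 r⁻¹ + 1 := Nat.ceil_lt_add_one hlogbnn
    have h2 : Real.logb 2 r⁻¹ ≤ 2 * |Real.log r| := by
      rw [hlogb, habs, div_le_iff₀ (by linarith)]
      nlinarith
    rw [habs] at h2 ⊢
    nlinarith
  -- assemble
  calc ∫⁻ z in closedBall (0 : EuclideanSpace ℝ (Fin (e + 1))) 1 ∩ (ball x (3 * r))ᶜ, f z ∂volume
      ≤ ∫⁻ z in (⋃ k ∈ Finset.range (N + 1), a k) ∪ T, f z ∂volume := lintegral_mono_set hcover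
    _ ≤ (∫⁻ z in ⋃ k ∈ Finset.range (N + 1), a k, f z ∂volume) + ∫⁻ z in T, f z ∂volume :=
        lintegral_union_le _ _ _
    _ ≤ (∑ k ∈ Finset.range (N + 1), ∫⁻ z in a k, f z ∂volume) + A := by
        rw [lintegral_biUnion_finset hdisj
          (fun k _ => measurableSet_ball.diff measurableSet_ball) f]
        exact add_le_add le_rfl hTbound
    _ ≤ (∑ _k ∈ Finset.range (N + 1), A) + A := by
        exact add_le_add (Finset.sum_le_sum fun k _ => hpiece k) le_rfl
    _ = ((N : ℝ≥0∞) + 1) * A + A := by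
        rw [Finset.sum_const, Finset.card_range, nsmul_eq_mul]
        push_cast
        ring
    _ = ((N : ℝ≥0∞) + 2) * A := by ring
    _ ≤ ENNReal.ofReal (3 * (1 + |Real.log r|)) * A := by
        gcongr
        have : ((N : ℝ≥0∞) + 2) = ENNReal.ofReal ((N : ℝ) + 2) := by
          rw [ENNReal.ofReal_add (by positivity) (by norm_num), ENNReal.ofReal_natCast]
          norm_num
        rw [this]
        exact ENNReal.ofReal_le_ofReal hNbound

set_option maxHeartbeats 2000000 in
theorem coulomb_field_logLipschitz (d : ℕ) (hd : 2 ≤ d) :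
    ∃ C : ℝ, 0 < C ∧
      ∀ (M : ℝ), 0 ≤ M →
      ∀ h : EuclideanSpace ℝ (Fin d) → ℝ, Measurable h →
      (∀ᵐ z : EuclideanSpace ℝ (Fin d), |h z| ≤ M) →
      (∀ z : EuclideanSpace ℝ (Fin d), 1 < ‖z‖ → h z = 0) →
      (∀ x : EuclideanSpace ℝ (Fin d),
        Integrable (fun z => h z • ((‖x - z‖ ^ d)⁻¹ • (x - z)))) →
      ∀ x y : EuclideanSpace ℝ (Fin d), 0 < ‖x - y‖ → ‖x - y‖ ≤ 1 / 12 →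
        ‖(∫ z, h z • ((‖x - z‖ ^ d)⁻¹ • (x - z))) -
            (∫ z, h z • ((‖y - z‖ ^ d)⁻¹ • (y - z)))‖ ≤
          C * M * ‖x - y‖ * (1 + |Real.log ‖x - y‖|) := by
  obtain ⟨e, rfl⟩ : ∃ e, d = e + 1 := ⟨d - 1, by omega⟩
  set d := e + 1 with hd'
  set V := EuclideanSpace ℝ (Fin d) with hV
  set κ : ℝ≥0∞ := volume (ball (0 : V) 1) with hκ
  have hκfin : κ ≠ ⊤ := measure_ball_lt_top.ne
  set κR : ℝ := κ.toReal with hκR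
  have hκRnn : 0 ≤ κR := ENNReal.toReal_nonneg
  have hκeq : κ = ENNReal.ofReal κR := (ENNReal.ofReal_toReal hκfin).symm
  set Cd : ℝ := 1 + d * 2 ^ (d - 1) with hCd
  have hCdpos : 0 < Cd := by positivity
  refine ⟨2 ^ d * κR * (7 + 3 * Cd) + 1, by positivity, ?_⟩
  intro M hM h hmeas hbM hsupp hint x y hr0 hr12
  set r : ℝ := ‖x - y‖ with hr
  have hr1 : r ≤ 1 := by rw [hr] at hr12 ⊢; linarith
  have hrpos : 0 < r := hr0
  set B : Set V := ball x (3 * r) with hB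
  set F : V → V := fun z =>
    h z • ((‖x - z‖ ^ d)⁻¹ • (x - z) - (‖y - z‖ ^ d)⁻¹ • (y - z)) with hF
  have hFint : Integrable F := by
    have := (hint x).sub (hint y)
    apply this.congr
    filter_upwards with z
    rw [hF]; simp [smul_sub]
  have hsub : (∫ z, h z • ((‖x - z‖ ^ d)⁻¹ • (x - z))) -
      (∫ z, h z • ((‖y - z‖ ^ d)⁻¹ • (y - z))) = ∫ z, F z := by
    rw [← integral_sub (hint x) (hint y)]
    congr 1
    funext z
    rw [hF]; simp [smul_sub]
  rw [hsub]
  have hsplit : ∫ z, F z = (∫ z in B, F z) + ∫ z in Bᶜ, F z :=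
    (integral_add_compl measurableSet_ball hFint).symm
  rw [hsplit]
  -- measurability helpers
  have hcontx : Continuous fun z : V => ‖x - z‖ := (continuous_const.sub continuous_id).norm
  have hconty : Continuous fun z : V => ‖y - z‖ := (continuous_const.sub continuous_id).norm
  have hmx : Measurable fun z : V => ENNReal.ofReal ((‖x - z‖ ^ d)⁻¹ * ‖x - z‖) :=
    (((hcontx.pow d).measurable.inv).mul hcontx.measurable).ennreal_ofReal
  have hmy : Measurable fun z : V => ENNReal.ofReal ((‖y - z‖ ^ d)⁻¹ * ‖y - z‖) :=
    (((hconty.pow d).measurable.inv).mul hconty.measurable).ennreal_ofReal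
  have hminv : Measurable fun z : V => ENNReal.ofReal ((‖x - z‖ ^ d)⁻¹) :=
    ((hcontx.pow d).measurable.inv).ennreal_ofReal
  -- kernel norm identity
  have hKnorm : ∀ (c z : V), ‖(‖c - z‖ ^ d)⁻¹ • (c - z)‖ = (‖c - z‖ ^ d)⁻¹ * ‖c - z‖ := by
    intro c z
    rw [norm_smul, Real.norm_eq_abs, abs_of_nonneg (by positivity)]
  -- NEAR BOUND
  have hnear : ‖∫ z in B, F z‖ ≤ M * (2 ^ d * (7 * r)) * κR := by
    have hle1 : ‖∫ z in B, F z‖ ≤ (∫⁻ z in B, ENNReal.ofReal ‖F z‖).toReal :=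
      norm_integral_le_lintegral_norm F
    refine hle1.trans (ENNReal.toReal_le_of_le_ofReal (by positivity) ?_)
    have step1 : ∫⁻ z in B, ENNReal.ofReal ‖F z‖
        ≤ ∫⁻ z in B, ENNReal.ofReal M * (ENNReal.ofReal ((‖x - z‖ ^ d)⁻¹ * ‖x - z‖)
            + ENNReal.ofReal ((‖y - z‖ ^ d)⁻¹ * ‖y - z‖)) := by
      apply lintegral_mono_ae
      filter_upwards [ae_restrict_of_ae hbM] with z hz
      rw [hF]
      simp only
      rw [← ENNReal.ofReal_add (by positivity) (by positivity),
        ← ENNReal.ofReal_mul hM]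
      apply ENNReal.ofReal_le_ofReal
      calc ‖h z • ((‖x - z‖ ^ d)⁻¹ • (x - z) - (‖y - z‖ ^ d)⁻¹ • (y - z))‖
          = |h z| * ‖(‖x - z‖ ^ d)⁻¹ • (x - z) - (‖y - z‖ ^ d)⁻¹ • (y - z)‖ := by
            rw [norm_smul, Real.norm_eq_abs]
        _ ≤ M * (‖(‖x - z‖ ^ d)⁻¹ • (x - z)‖ + ‖(‖y - z‖ ^ d)⁻¹ • (y - z)‖) := by
            apply mul_le_mul hz (norm_sub_le _ _) (norm_nonneg _)
            exact hM
        _ = M * ((‖x - z‖ ^ d)⁻¹ * ‖x - z‖ + (‖y - z‖ ^ d)⁻¹ * ‖y - z‖) := by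
            rw [hKnorm, hKnorm]
    refine step1.trans ?_
    rw [lintegral_const_mul (f := fun z => ENNReal.ofReal ((‖x - z‖ ^ d)⁻¹ * ‖x - z‖) + ENNReal.ofReal ((‖y - z‖ ^ d)⁻¹ * ‖y - z‖)) _ (hmx.add hmy), lintegral_add_left hmx]
    have hnx : ∫⁻ z in B, ENNReal.ofReal ((‖x - z‖ ^ d)⁻¹ * ‖x - z‖)
        ≤ ENNReal.ofReal (2 ^ d * (3 * r)) * κ := aux_near e x (by positivity)
    have hB4 : B ⊆ ball y (4 * r) := by
      intro z hz
      have h1 : dist z x < 3 * r := mem_ball.1 hz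
      have h2 : dist x y = r := by rw [hr, dist_eq_norm]
      have := dist_triangle z x y
      exact mem_ball.2 (by linarith)
    have hny : ∫⁻ z in B, ENNReal.ofReal ((‖y - z‖ ^ d)⁻¹ * ‖y - z‖)
        ≤ ENNReal.ofReal (2 ^ d * (4 * r)) * κ := by
      refine (lintegral_mono_set hB4).trans ?_
      exact aux_near e y (by positivity)
    calc ENNReal.ofReal M * ((∫⁻ z in B, ENNReal.ofReal ((‖x - z‖ ^ d)⁻¹ * ‖x - z‖))
          + ∫⁻ z in B, ENNReal.ofReal ((‖y - z‖ ^ d)⁻¹ * ‖y - z‖))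
        ≤ ENNReal.ofReal M * (ENNReal.ofReal (2 ^ d * (3 * r)) * κ
            + ENNReal.ofReal (2 ^ d * (4 * r)) * κ) := by
          gcongr
      _ = ENNReal.ofReal (M * (2 ^ d * (7 * r)) * κR) := by
          rw [← add_mul, ← ENNReal.ofReal_add (by positivity) (by positivity), hκeq,
            ← ENNReal.ofReal_mul (by positivity), ← ENNReal.ofReal_mul (by positivity)]
          congr 1
          ring
  -- FAR BOUND
  have hfar : ‖∫ z in Bᶜ, F z‖ ≤ M * (Cd * r) * (3 * (1 + |Real.log r|)) * (2 ^ d * κR) := by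
    have hle1 : ‖∫ z in Bᶜ, F z‖ ≤ (∫⁻ z in Bᶜ, ENNReal.ofReal ‖F z‖).toReal :=
      norm_integral_le_lintegral_norm F
    refine hle1.trans (ENNReal.toReal_le_of_le_ofReal (by positivity) ?_)
    set G : V → ℝ≥0∞ := fun z => (closedBall (0:V) 1).indicator
      (fun z => ENNReal.ofReal (M * (Cd * r) * (‖x - z‖ ^ d)⁻¹)) z with hG
    have step1 : ∫⁻ z in Bᶜ, ENNReal.ofReal ‖F z‖ ≤ ∫⁻ z in Bᶜ, G z := by
      apply lintegral_mono_ae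
      filter_upwards [ae_restrict_of_ae hbM, ae_restrict_mem measurableSet_ball.compl]
        with z hz hzB
      by_cases hz1 : 1 < ‖z‖
      · have : F z = 0 := by rw [hF]; simp [hsupp z hz1]
        simp [this]
      · push_neg at hz1
        have hzcb : z ∈ closedBall (0:V) 1 := by
          rw [mem_closedBall_zero_iff]; exact hz1
        rw [hG]
        simp only [indicator_of_mem hzcb]
        apply ENNReal.ofReal_le_ofReal
        have h3r : 3 * r ≤ ‖x - z‖ := by
          have h1 : ¬ dist z x < 3 * r := fun hc => hzB (mem_ball.2 hc)
          rw [show ‖x - z‖ = dist z x by rw [dist_comm, dist_eq_norm]]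
          linarith [not_lt.1 h1]
        have hker := aux_kernel_diff (d := d) (by omega)
          (a := x - z) (b := y - z) (r := r) hrpos
          (by rw [show (x - z) - (y - z) = x - y by abel]) h3r
        rw [hF]
        simp only
        rw [norm_smul, Real.norm_eq_abs]
        calc |h z| * ‖(‖x - z‖ ^ d)⁻¹ • (x - z) - (‖y - z‖ ^ d)⁻¹ • (y - z)‖
            ≤ M * ((1 + d * 2 ^ (d - 1)) * r * (‖x - z‖ ^ d)⁻¹) := by
              apply mul_le_mul hz hker (norm_nonneg _) hM
          _ = M * (Cd * r) * (‖x - z‖ ^ d)⁻¹ := by rw [hCd]; ring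
    refine step1.trans ?_
    have step2 : ∫⁻ z in Bᶜ, G z
        = ∫⁻ z in closedBall (0:V) 1 ∩ Bᶜ, ENNReal.ofReal (M * (Cd * r) * (‖x - z‖ ^ d)⁻¹) := by
      rw [hG, lintegral_indicator measurableSet_closedBall,
        Measure.restrict_restrict measurableSet_closedBall]
    rw [step2]
    have step3 : ∫⁻ z in closedBall (0:V) 1 ∩ Bᶜ, ENNReal.ofReal (M * (Cd * r) * (‖x - z‖ ^ d)⁻¹)
        = ENNReal.ofReal (M * (Cd * r)) * ∫⁻ z in closedBall (0:V) 1 ∩ Bᶜ,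
            ENNReal.ofReal ((‖x - z‖ ^ d)⁻¹) := by
      rw [← lintegral_const_mul _ hminv]
      congr 1
      funext z
      rw [← ENNReal.ofReal_mul (by positivity)]
    rw [step3]
    calc ENNReal.ofReal (M * (Cd * r)) * ∫⁻ z in closedBall (0:V) 1 ∩ Bᶜ,
            ENNReal.ofReal ((‖x - z‖ ^ d)⁻¹)
        ≤ ENNReal.ofReal (M * (Cd * r)) *
            (ENNReal.ofReal (3 * (1 + |Real.log r|)) * (ENNReal.ofReal (2 ^ d) * κ)) := by
          gcongr
          exact aux_far e x hrpos hr1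
      _ = ENNReal.ofReal (M * (Cd * r) * (3 * (1 + |Real.log r|)) * (2 ^ d * κR)) := by
          rw [hκeq, ← ENNReal.ofReal_mul (by positivity),
            ← ENNReal.ofReal_mul (by positivity), ← ENNReal.ofReal_mul (by positivity)]
          congr 1
          ring
  -- TOTAL
  have htot := (norm_add_le _ _).trans (add_le_add hnear hfar)
  refine htot.trans ?_
  have hL : 0 ≤ |Real.log r| := abs_nonneg _
  have hMr : 0 ≤ M * r := by positivity
  have h2d : (0:ℝ) < 2 ^ d := by positivity
  nlinarith [mul_nonneg (mul_nonneg (mul_nonneg hM hrpos.le) hκRnn) hL,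
    mul_nonneg hMr hκRnn, mul_nonneg (mul_nonneg hMr hκRnn) hL,
    mul_pos h2d (mul_pos hrpos hrpos)]
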